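/- There are no traveling wave solutions with nonzero speed: if φ : ℝ → ℝ is a C² function with φ' > 0 on (ω₋, ω₊), φ(ω₋) = -1, φ(ω₊) = 1, D(φ)(φ')² vanishes at ω₋ and ω₊, and -c φ' = ε² D(φ) φ'' + (ε²/2) D'(φ) (φ')² - F'(φ) on (ω₋, ω₊), where F(±1) = 0 and ∫ (φ')² > 0, then c = 0. -/

import Mathlib

open Set intervalIntegral

/-- No traveling waves with nonzero speed for the generalized Allen--Cahn equation. -/
theorem no_nonzero_speed_traveling_wave
    (D F φ : ℝ → ℝ) (c ε ωm ωp : ℝ)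
    (hε : 0 < ε) (hω : ωm < ωp)
    (hD : ContDiff ℝ 1 D) (hDpos : ∀ u, 0 ≤ D u)
    (hF : ContDiff ℝ 1 F) (hFm1 : F (-1) = 0) (hFp1 : F 1 = 0)
    (hφ : ContDiff ℝ 2 φ)
    (hmono : ∀ x ∈ Ioo ωm ωp, 0 < deriv φ x)
    (hbc1 : φ ωm = -1) (hbc2 : φ ωp = 1)
    (hdeg1 : D (φ ωm) * (deriv φ ωm) ^ 2 = 0)
    (hdeg2 : D (φ ωp) * (deriv φ ωp) ^ 2 = 0)
    (heq : ∀ x ∈ Ioo ωm ωp,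
      -c * deriv φ x =
        ε ^ 2 * D (φ x) * deriv (deriv φ) x
          + ε ^ 2 / 2 * deriv D (φ x) * (deriv φ x) ^ 2 - deriv F (φ x))
    (hint : 0 < ∫ x in ωm..ωp, (deriv φ x) ^ 2) :
    c = 0 := by
  set E : ℝ → ℝ := fun x => ε ^ 2 / 2 * D (φ x) * (deriv φ x) ^ 2 - F (φ x) with hE
  have hφdiff : Differentiable ℝ φ := hφ.differentiable (by norm_num)
  have hφ' : ContDiff ℝ 1 (deriv φ) := (contDiff_succ_iff_deriv.mp (show ContDiff ℝ (1+1) φ by norm_num [hφ])).2.2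
  have hφ'diff : Differentiable ℝ (deriv φ) := hφ'.differentiable (by norm_num)
  have hEderiv : ∀ x ∈ Ioo ωm ωp, HasDerivAt E (-c * (deriv φ x) ^ 2) x := by
    intro x hx
    have h1 : HasDerivAt φ (deriv φ x) x := hφdiff.differentiableAt.hasDerivAt
    have h2 : HasDerivAt (deriv φ) (deriv (deriv φ) x) x :=
      hφ'diff.differentiableAt.hasDerivAt
    have hDd : HasDerivAt D (deriv D (φ x)) (φ x) :=
      (hD.differentiable (by norm_num)).differentiableAt.hasDerivAt
    have hFd : HasDerivAt F (deriv F (φ x)) (φ x) :=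
      (hF.differentiable (by norm_num)).differentiableAt.hasDerivAt
    have hDc : HasDerivAt (fun y => D (φ y)) (deriv D (φ x) * deriv φ x) x := hDd.comp x h1
    have hFc : HasDerivAt (fun y => F (φ y)) (deriv F (φ x) * deriv φ x) x := hFd.comp x h1
    have hsq : HasDerivAt (fun y => (deriv φ y) ^ 2)
        (2 * deriv φ x * deriv (deriv φ) x) x := by
      simpa [mul_comm, pow_one] using h2.fun_pow 2
    have := ((hDc.const_mul (ε ^ 2 / 2)).mul hsq).sub hFc
    have key := heq x hx
    refine this.congr_deriv ?_
    have : -c * (deriv φ x) ^ 2 = (-c * deriv φ x) * deriv φ x := by ring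
    rw [this, key]; ring
  have hEcont : ContinuousOn E (Icc ωm ωp) := by
    apply Continuous.continuousOn
    have h1 := hD.continuous
    have h2 := hF.continuous
    have h3 := hφ.continuous
    have h4 := hφ'.continuous
    rw [hE]; fun_prop
  have hccont : Continuous (fun x => -c * (deriv φ x) ^ 2) := by
    have := hφ'.continuous
    fun_prop
  have hFTC : (∫ x in ωm..ωp, -c * (deriv φ x) ^ 2) = E ωp - E ωm := by
    apply intervalIntegral.integral_eq_sub_of_hasDeriv_right_of_le hω.le hEcont
      (fun x hx => (hEderiv x hx).hasDerivWithinAt)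
    exact hccont.intervalIntegrable _ _
  have hEp : E ωp = 0 := by
    simp only [hE]; rw [mul_assoc, hdeg2, hbc2, hFp1, mul_zero, sub_zero]
  have hEm : E ωm = 0 := by
    simp only [hE]; rw [mul_assoc, hdeg1, hbc1, hFm1, mul_zero, sub_zero]
  have : -c * ∫ x in ωm..ωp, (deriv φ x) ^ 2 = 0 := by
    rw [← intervalIntegral.integral_const_mul, hFTC, hEp, hEm, sub_zero]
  have hc : -c = 0 := by
    rcases mul_eq_zero.mp this with h | h
    · exact h
    · exact absurd h hint.ne'
  linarith
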